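/- Let X : [0,T] → ℝ be absolutely continuous with square-integrable derivative X', and let v : [0,T] → ℝ be absolutely continuous with square-integrable derivative v' and v(0) = v(T) = 0. Then the map ε ↦ I(X + εv) is differentiable at ε = 0 with derivative (d/dε) I(X + εv)|_{ε=0} = γ ∫₀ᵀ v'(t) ( ∫₀ᵀ X'(s) e^{−ρ|t−s|} ds ) dt + 2η ∫₀ᵀ v'(t) X'(t) dt. -/

import Mathlib

open MeasureTheory Set

section Stmt7Aux

lemma ker_le_one {ρ x : ℝ} (hρ : 0 ≤ ρ) (hx : 0 ≤ x) : ‖Real.exp (-ρ * x)‖ ≤ 1 := by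
  rw [Real.norm_eq_abs, abs_of_pos (Real.exp_pos _)]
  exact Real.exp_le_one_iff.2 (by nlinarith)

lemma integrableOn_mul_ker {f k : ℝ → ℝ} {A : Set ℝ} (hA : MeasurableSet A)
    (hf : IntegrableOn f A) (hk : Continuous k) {C : ℝ} (hC : ∀ s ∈ A, ‖k s‖ ≤ C) :
    IntegrableOn (fun s => f s * k s) A := by
  have h := hf.bdd_mul (c := C) hk.aestronglyMeasurable
    ((ae_restrict_iff' hA).2 (Filter.Eventually.of_forall hC))
  exact h.congr (Filter.Eventually.of_forall fun x => mul_comm _ _)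

lemma K_bound {f : ℝ → ℝ} {T ρ : ℝ} (hρ : 0 ≤ ρ) (hf : IntegrableOn f (Ioc 0 T))
    {t : ℝ} (ht : t ∈ Ioc (0:ℝ) T) :
    ‖∫ s in (0:ℝ)..t, f s * Real.exp (-ρ * (t - s))‖ ≤ ∫ s in Ioc (0:ℝ) T, ‖f s‖ := by
  have hsub : Ioc (0:ℝ) t ⊆ Ioc 0 T := Ioc_subset_Ioc le_rfl ht.2
  have hker : Continuous fun s : ℝ => Real.exp (-ρ * (t - s)) := by fun_prop
  have int1 : IntegrableOn (fun s : ℝ => f s * Real.exp (-ρ * (t - s))) (Ioc 0 t) :=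
    integrableOn_mul_ker measurableSet_Ioc (hf.mono_set hsub) hker (C := 1)
      (fun s hs => ker_le_one hρ (by linarith [hs.2]))
  rw [intervalIntegral.integral_of_le ht.1.le]
  calc ‖∫ s in Ioc (0:ℝ) t, f s * Real.exp (-ρ * (t - s))‖
      ≤ ∫ s in Ioc (0:ℝ) t, ‖f s * Real.exp (-ρ * (t - s))‖ := norm_integral_le_integral_norm _
    _ ≤ ∫ s in Ioc (0:ℝ) t, ‖f s‖ := by
        refine setIntegral_mono_on int1.norm ((hf.mono_set hsub).norm) measurableSet_Ioc ?_
        intro s hs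
        rw [norm_mul]
        exact mul_le_of_le_one_right (norm_nonneg _)
          (by simpa using ker_le_one hρ (by linarith [hs.2]))
    _ ≤ ∫ s in Ioc (0:ℝ) T, ‖f s‖ := by
        refine setIntegral_mono_set hf.norm
          (Filter.Eventually.of_forall fun s => norm_nonneg _)
          (HasSubset.Subset.eventuallyLE hsub)

lemma K_cont {f : ℝ → ℝ} {T ρ : ℝ} (hρ : 0 ≤ ρ) (hf : Integrable f volume)
    (h0 : ∀ s, s ∉ Ioc (0:ℝ) T → f s = 0) :
    Continuous fun t => ∫ s in (0:ℝ)..t, f s * Real.exp (-ρ * (t - s)) := by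
  have hint : Integrable (fun s => f s * Real.exp (ρ * s)) volume := by
    have heq : (fun s => f s * Real.exp (ρ * s))
        = (Ioc (0:ℝ) T).indicator (fun s => f s * Real.exp (ρ * s)) := by
      funext s
      by_cases hs : s ∈ Ioc (0:ℝ) T
      · rw [indicator_of_mem hs]
      · rw [indicator_of_notMem hs, h0 s hs, zero_mul]
    rw [heq, integrable_indicator_iff measurableSet_Ioc]
    refine integrableOn_mul_ker measurableSet_Ioc hf.integrableOn (by fun_prop)
      (C := Real.exp (ρ * T)) ?_
    intro s hs
    rw [Real.norm_eq_abs, abs_of_pos (Real.exp_pos _)]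
    exact Real.exp_le_exp.2 (by nlinarith [hs.1, hs.2])
  have heq : (fun t => ∫ s in (0:ℝ)..t, f s * Real.exp (-ρ * (t - s)))
      = fun t => Real.exp (-ρ * t) * ∫ s in (0:ℝ)..t, f s * Real.exp (ρ * s) := by
    funext t
    rw [← intervalIntegral.integral_const_mul]
    apply intervalIntegral.integral_congr
    intro s _
    dsimp only
    rw [show -ρ * (t - s) = -ρ * t + ρ * s by ring, Real.exp_add]
    ring
  rw [heq]
  exact (Real.continuous_exp.comp (by fun_prop)).mul (hint.continuous_primitive 0)

lemma L2_mul_integrable {f g : ℝ → ℝ} {μ : Measure ℝ} (hf : MemLp f 2 μ) (hg : MemLp g 2 μ) :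
    Integrable (fun t => f t * g t) μ := by
  have h := L2.integrable_inner (𝕜 := ℝ) (hf.toLp f) (hg.toLp g)
  refine h.congr ?_
  filter_upwards [hf.coeFn_toLp, hg.coeFn_toLp] with x h1 h2
  rw [h1, h2]
  simp [RCLike.inner_apply]
  ring

lemma sym_split {f g : ℝ → ℝ} {T ρ : ℝ} (hρ : 0 ≤ ρ)
    (hf : IntegrableOn f (Ioc 0 T)) (hg : IntegrableOn g (Ioc 0 T)) :
    ∫ t in Ioc (0:ℝ) T, g t * ∫ s in Ioc (0:ℝ) T, f s * Real.exp (-ρ * |t - s|)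
      = (∫ t in Ioc (0:ℝ) T, g t * ∫ s in (0:ℝ)..t, f s * Real.exp (-ρ * (t - s)))
        + ∫ s in Ioc (0:ℝ) T, f s * ∫ t in (0:ℝ)..s, g t * Real.exp (-ρ * (s - t)) := by
  haveI : IsFiniteMeasure (volume.restrict (Ioc (0:ℝ) T)) :=
    ⟨by rw [Measure.restrict_apply_univ]; exact measure_Ioc_lt_top⟩
  set H : ℝ × ℝ → ℝ := fun p => g p.1 * f p.2 * Real.exp (-ρ * |p.1 - p.2|) with hHdef
  have hHint : Integrable H
      ((volume.restrict (Ioc (0:ℝ) T)).prod (volume.restrict (Ioc (0:ℝ) T))) := by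
    have h1 : Integrable (fun p : ℝ × ℝ => g p.1 * f p.2)
        ((volume.restrict (Ioc (0:ℝ) T)).prod (volume.restrict (Ioc (0:ℝ) T))) :=
      hg.mul_prod hf
    have h2 := h1.bdd_mul (c := 1)
      (Continuous.aestronglyMeasurable (by fun_prop :
        Continuous fun p : ℝ × ℝ => Real.exp (-ρ * |p.1 - p.2|)))
      (Filter.Eventually.of_forall fun p => ker_le_one hρ (abs_nonneg _))
    exact h2.congr (Filter.Eventually.of_forall fun p => by simp only [hHdef]; ring)
  set S : Set (ℝ × ℝ) := {q : ℝ × ℝ | q.2 ≤ q.1} with hSdef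
  have hSm : MeasurableSet S := measurableSet_le measurable_snd measurable_fst
  have hH1 : Integrable (S.indicator H)
      ((volume.restrict (Ioc (0:ℝ) T)).prod (volume.restrict (Ioc (0:ℝ) T))) :=
    hHint.indicator hSm
  have hH2 : Integrable (Sᶜ.indicator H)
      ((volume.restrict (Ioc (0:ℝ) T)).prod (volume.restrict (Ioc (0:ℝ) T))) :=
    hHint.indicator hSm.compl
  have hsplit : H = fun p => S.indicator H p + Sᶜ.indicator H p := by
    funext p
    by_cases hp : p ∈ S
    · rw [indicator_of_mem hp, indicator_of_notMem (by simpa using hp), add_zero]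
    · rw [indicator_of_notMem hp, indicator_of_mem (by simpa using hp), zero_add]
  have hLHS : (∫ t in Ioc (0:ℝ) T, g t * ∫ s in Ioc (0:ℝ) T, f s * Real.exp (-ρ * |t - s|))
      = ∫ p, H p ∂((volume.restrict (Ioc (0:ℝ) T)).prod (volume.restrict (Ioc (0:ℝ) T))) := by
    rw [integral_prod _ hHint]
    refine integral_congr_ae (Filter.Eventually.of_forall fun t => ?_)
    dsimp only
    rw [← integral_const_mul]
    exact integral_congr_ae (Filter.Eventually.of_forall fun s => by simp only [hHdef]; ring)
  have h1eq : (∫ p, S.indicator H p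
          ∂((volume.restrict (Ioc (0:ℝ) T)).prod (volume.restrict (Ioc (0:ℝ) T))))
      = ∫ t in Ioc (0:ℝ) T, g t * ∫ s in (0:ℝ)..t, f s * Real.exp (-ρ * (t - s)) := by
    rw [integral_prod _ hH1]
    refine setIntegral_congr_fun measurableSet_Ioc ?_
    intro t ht
    dsimp only
    have hpt : ∀ s : ℝ, S.indicator H (t, s)
        = (Iic t).indicator (fun s => g t * (f s * Real.exp (-ρ * (t - s)))) s := by
      intro s
      by_cases hs : s ≤ t
      · rw [indicator_of_mem (show (t, s) ∈ S from hs), indicator_of_mem (show s ∈ Iic t from hs)]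
        simp only [hHdef]
        have habs : |t - s| = t - s := abs_of_nonneg (by linarith)
        rw [habs]; ring
      · rw [indicator_of_notMem (show (t, s) ∉ S from hs),
          indicator_of_notMem (show s ∉ Iic t from hs)]
    simp_rw [hpt]
    rw [setIntegral_indicator measurableSet_Iic]
    have hset : Ioc (0:ℝ) T ∩ Iic t = Ioc 0 t := by
      ext s
      simp only [mem_inter_iff, mem_Ioc, mem_Iic]
      exact ⟨fun h => ⟨h.1.1, h.2⟩, fun h => ⟨⟨h.1, h.2.trans ht.2⟩, h.2⟩⟩
    rw [hset, intervalIntegral.integral_of_le ht.1.le, integral_const_mul]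
  have h2eq : (∫ p, Sᶜ.indicator H p
          ∂((volume.restrict (Ioc (0:ℝ) T)).prod (volume.restrict (Ioc (0:ℝ) T))))
      = ∫ s in Ioc (0:ℝ) T, f s * ∫ t in (0:ℝ)..s, g t * Real.exp (-ρ * (s - t)) := by
    rw [integral_prod_symm _ hH2]
    refine setIntegral_congr_fun measurableSet_Ioc ?_
    intro s hs
    dsimp only
    have hpt : ∀ t : ℝ, Sᶜ.indicator H (t, s)
        = (Iio s).indicator (fun t => f s * (g t * Real.exp (-ρ * (s - t)))) t := by
      intro t
      by_cases hts : t < s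
      · rw [indicator_of_mem (show (t, s) ∈ Sᶜ from not_le.2 hts),
          indicator_of_mem (show t ∈ Iio s from hts)]
        simp only [hHdef]
        have habs : |t - s| = s - t := by rw [abs_of_nonpos (by linarith)]; ring
        rw [habs]; ring
      · rw [indicator_of_notMem (show (t, s) ∉ Sᶜ from by simpa [hSdef] using not_lt.1 hts),
          indicator_of_notMem (show t ∉ Iio s from by simpa using hts)]
    simp_rw [hpt]
    rw [setIntegral_indicator measurableSet_Iio]
    have hset : Ioc (0:ℝ) T ∩ Iio s = Ioo 0 s := by
      ext t
      simp only [mem_inter_iff, mem_Ioc, mem_Iio, mem_Ioo]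
      exact ⟨fun h => ⟨h.1.1, h.2⟩, fun h => ⟨⟨h.1, (le_of_lt h.2).trans hs.2⟩, h.2⟩⟩
    rw [hset, intervalIntegral.integral_of_le hs.1.le, integral_Ioc_eq_integral_Ioo,
      integral_const_mul]
  rw [hLHS]
  conv_lhs => rw [hsplit]
  rw [integral_add hH1 hH2, h1eq, h2eq]

lemma split3 {μ : Measure ℝ} {A B C : ℝ → ℝ} (hA : Integrable A μ) (hB : Integrable B μ)
    (hC : Integrable C μ) (ε : ℝ) :
    ∫ t, (A t + ε * B t + ε ^ 2 * C t) ∂μ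
      = (∫ t, A t ∂μ) + ε * (∫ t, B t ∂μ) + ε ^ 2 * ∫ t, C t ∂μ := by
  have h1 : Integrable (fun t => A t + ε * B t) μ := hA.add (hB.const_mul ε)
  rw [integral_add h1 (hC.const_mul (ε ^ 2)),
    integral_add hA (hB.const_mul ε), integral_const_mul, integral_const_mul]

lemma split3c {μ : Measure ℝ} {A B C : ℝ → ℝ} (hA : Integrable A μ) (hB : Integrable B μ)
    (hC : Integrable C μ) (a b c : ℝ) :
    ∫ t, (a * A t + b * B t + c * C t) ∂μ
      = a * (∫ t, A t ∂μ) + b * (∫ t, B t ∂μ) + c * ∫ t, C t ∂μ := by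
  have h1 : Integrable (fun t => a * A t + b * B t) μ := (hA.const_mul a).add (hB.const_mul b)
  rw [integral_add h1 (hC.const_mul c),
    integral_add (hA.const_mul a) (hB.const_mul b),
    integral_const_mul, integral_const_mul, integral_const_mul]

end Stmt7Aux

/-- First variation of the impact-cost functional: for `X` absolutely continuous with
square-integrable derivative `X'` and `v` absolutely continuous with square-integrable
derivative `v'` and `v(0) = v(T) = 0`, the map `ε ↦ I(X + εv)` is differentiable at `0`
with the stated derivative. (Here `I` is expressed as a functional of the derivative,
and the derivative of `X + εv` is `X' + εv'`.) -/
theorem stmt_7 (T η γ ρ : ℝ) (hT : 0 < T) (hη : 0 < η) (hγ : 0 < γ) (hρ : 0 < ρ)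
    (I : (ℝ → ℝ) → ℝ)
    (hI : ∀ g : ℝ → ℝ, I g = ∫ t in (0:ℝ)..T,
      (γ * g t * (∫ s in (0:ℝ)..t, g s * Real.exp (-ρ * (t - s))) + η * (g t) ^ 2))
    (X X' v v' : ℝ → ℝ)
    (hX : ∀ t ∈ Icc (0:ℝ) T, X t = X 0 + ∫ s in (0:ℝ)..t, X' s)
    (hX' : MemLp X' 2 (volume.restrict (Icc 0 T)))
    (hv : ∀ t ∈ Icc (0:ℝ) T, v t = v 0 + ∫ s in (0:ℝ)..t, v' s)
    (hv' : MemLp v' 2 (volume.restrict (Icc 0 T)))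
    (hv0 : v 0 = 0) (hvT : v T = 0) :
    HasDerivAt (fun ε : ℝ => I (fun t => X' t + ε * v' t))
      (γ * (∫ t in (0:ℝ)..T, v' t * ∫ s in (0:ℝ)..T, X' s * Real.exp (-ρ * |t - s|)) +
        2 * η * ∫ t in (0:ℝ)..T, v' t * X' t) 0 := by
  classical
  have hIocIcc : Ioc (0:ℝ) T ⊆ Icc 0 T := Ioc_subset_Icc_self
  haveI hfin : IsFiniteMeasure (volume.restrict (Ioc (0:ℝ) T)) :=
    ⟨by rw [Measure.restrict_apply_univ]; exact measure_Ioc_lt_top⟩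
  set f : ℝ → ℝ := (Ioc (0:ℝ) T).indicator X' with hfdef
  set g : ℝ → ℝ := (Ioc (0:ℝ) T).indicator v' with hgdef
  have hX2 : MemLp X' 2 (volume.restrict (Ioc (0:ℝ) T)) :=
    hX'.mono_measure (Measure.restrict_mono hIocIcc le_rfl)
  have hv2 : MemLp v' 2 (volume.restrict (Ioc (0:ℝ) T)) :=
    hv'.mono_measure (Measure.restrict_mono hIocIcc le_rfl)
  have hf2 : MemLp f 2 (volume.restrict (Ioc (0:ℝ) T)) :=
    ((memLp_indicator_iff_restrict measurableSet_Ioc).2 hX2).restrict _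
  have hg2 : MemLp g 2 (volume.restrict (Ioc (0:ℝ) T)) :=
    ((memLp_indicator_iff_restrict measurableSet_Ioc).2 hv2).restrict _
  have hfi : Integrable f volume :=
    (integrable_indicator_iff measurableSet_Ioc).2 (hX2.integrable one_le_two)
  have hgi : Integrable g volume :=
    (integrable_indicator_iff measurableSet_Ioc).2 (hv2.integrable one_le_two)
  have hf0 : ∀ s, s ∉ Ioc (0:ℝ) T → f s = 0 := fun s hs => indicator_of_notMem hs _
  have hg0 : ∀ s, s ∉ Ioc (0:ℝ) T → g s = 0 := fun s hs => indicator_of_notMem hs _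
  have hfIoc : IntegrableOn f (Ioc (0:ℝ) T) volume := hfi.integrableOn
  have hgIoc : IntegrableOn g (Ioc (0:ℝ) T) volume := hgi.integrableOn
  have hKXc : Continuous fun t => ∫ s in (0:ℝ)..t, f s * Real.exp (-ρ * (t - s)) :=
    K_cont hρ.le hfi hf0
  have hKvc : Continuous fun t => ∫ s in (0:ℝ)..t, g s * Real.exp (-ρ * (t - s)) :=
    K_cont hρ.le hgi hg0
  -- integrability of the products appearing in the coefficients
  have hfKX : IntegrableOn
      (fun t => f t * ∫ s in (0:ℝ)..t, f s * Real.exp (-ρ * (t - s))) (Ioc (0:ℝ) T) :=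
    integrableOn_mul_ker measurableSet_Ioc hfIoc hKXc
      (fun t ht => K_bound hρ.le hfIoc ht)
  have hfKv : IntegrableOn
      (fun t => f t * ∫ s in (0:ℝ)..t, g s * Real.exp (-ρ * (t - s))) (Ioc (0:ℝ) T) :=
    integrableOn_mul_ker measurableSet_Ioc hfIoc hKvc
      (fun t ht => K_bound hρ.le hgIoc ht)
  have hgKX : IntegrableOn
      (fun t => g t * ∫ s in (0:ℝ)..t, f s * Real.exp (-ρ * (t - s))) (Ioc (0:ℝ) T) :=
    integrableOn_mul_ker measurableSet_Ioc hgIoc hKXc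
      (fun t ht => K_bound hρ.le hfIoc ht)
  have hgKv : IntegrableOn
      (fun t => g t * ∫ s in (0:ℝ)..t, g s * Real.exp (-ρ * (t - s))) (Ioc (0:ℝ) T) :=
    integrableOn_mul_ker measurableSet_Ioc hgIoc hKvc
      (fun t ht => K_bound hρ.le hgIoc ht)
  have hff : Integrable (fun t => f t * f t) (volume.restrict (Ioc (0:ℝ) T)) :=
    L2_mul_integrable hf2 hf2
  have hfg : Integrable (fun t => f t * g t) (volume.restrict (Ioc (0:ℝ) T)) :=
    L2_mul_integrable hf2 hg2
  have hgg : Integrable (fun t => g t * g t) (volume.restrict (Ioc (0:ℝ) T)) :=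
    L2_mul_integrable hg2 hg2
  -- coefficients
  set c0 : ℝ := ∫ t in Ioc (0:ℝ) T,
    (γ * (f t * ∫ s in (0:ℝ)..t, f s * Real.exp (-ρ * (t - s))) + η * (f t * f t)) with hc0
  set c1 : ℝ := ∫ t in Ioc (0:ℝ) T,
    (γ * (f t * ∫ s in (0:ℝ)..t, g s * Real.exp (-ρ * (t - s)))
      + γ * (g t * ∫ s in (0:ℝ)..t, f s * Real.exp (-ρ * (t - s)))
      + 2 * η * (f t * g t)) with hc1
  set c2 : ℝ := ∫ t in Ioc (0:ℝ) T,
    (γ * (g t * ∫ s in (0:ℝ)..t, g s * Real.exp (-ρ * (t - s))) + η * (g t * g t)) with hc2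
  have hAint : Integrable (fun t =>
      γ * (f t * ∫ s in (0:ℝ)..t, f s * Real.exp (-ρ * (t - s))) + η * (f t * f t))
      (volume.restrict (Ioc (0:ℝ) T)) := (hfKX.const_mul γ).add (hff.const_mul η)
  have hBint : Integrable (fun t =>
      γ * (f t * ∫ s in (0:ℝ)..t, g s * Real.exp (-ρ * (t - s)))
      + γ * (g t * ∫ s in (0:ℝ)..t, f s * Real.exp (-ρ * (t - s)))
      + 2 * η * (f t * g t)) (volume.restrict (Ioc (0:ℝ) T)) :=
    ((hfKv.const_mul γ).add (hgKX.const_mul γ)).add (hfg.const_mul (2 * η))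
  have hCint : Integrable (fun t =>
      γ * (g t * ∫ s in (0:ℝ)..t, g s * Real.exp (-ρ * (t - s))) + η * (g t * g t))
      (volume.restrict (Ioc (0:ℝ) T)) := (hgKv.const_mul γ).add (hgg.const_mul η)
  -- the key quadratic expansion
  have key : ∀ ε : ℝ, I (fun t => X' t + ε * v' t) = c0 + c1 * ε + c2 * ε ^ 2 := by
    intro ε
    rw [hI, intervalIntegral.integral_of_le hT.le]
    have hstep : EqOn
        (fun t => γ * (X' t + ε * v' t) *
            (∫ s in (0:ℝ)..t, (X' s + ε * v' s) * Real.exp (-ρ * (t - s)))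
          + η * (X' t + ε * v' t) ^ 2)
        (fun t =>
          (γ * (f t * ∫ s in (0:ℝ)..t, f s * Real.exp (-ρ * (t - s))) + η * (f t * f t))
          + ε * (γ * (f t * ∫ s in (0:ℝ)..t, g s * Real.exp (-ρ * (t - s)))
              + γ * (g t * ∫ s in (0:ℝ)..t, f s * Real.exp (-ρ * (t - s)))
              + 2 * η * (f t * g t))
          + ε ^ 2 * (γ * (g t * ∫ s in (0:ℝ)..t, g s * Real.exp (-ρ * (t - s)))
              + η * (g t * g t)))
        (Ioc (0:ℝ) T) := by
      intro t ht
      dsimp only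
      have hsub : Ioc (0:ℝ) t ⊆ Ioc 0 T := Ioc_subset_Ioc le_rfl ht.2
      have hfs : X' t + ε * v' t = f t + ε * g t := by
        rw [hfdef, hgdef, indicator_of_mem ht, indicator_of_mem ht]
      have hinner : (∫ s in (0:ℝ)..t, (X' s + ε * v' s) * Real.exp (-ρ * (t - s)))
          = (∫ s in (0:ℝ)..t, f s * Real.exp (-ρ * (t - s)))
            + ε * ∫ s in (0:ℝ)..t, g s * Real.exp (-ρ * (t - s)) := by
        rw [intervalIntegral.integral_of_le ht.1.le, intervalIntegral.integral_of_le ht.1.le,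
          intervalIntegral.integral_of_le ht.1.le]
        have e1 : ∀ s ∈ Ioc (0:ℝ) t,
            (X' s + ε * v' s) * Real.exp (-ρ * (t - s))
            = f s * Real.exp (-ρ * (t - s)) + ε * (g s * Real.exp (-ρ * (t - s))) := by
          intro s hs
          rw [hfdef, hgdef, indicator_of_mem (hsub hs), indicator_of_mem (hsub hs)]
          ring
        rw [setIntegral_congr_fun measurableSet_Ioc e1]
        have i1 : IntegrableOn (fun s => f s * Real.exp (-ρ * (t - s))) (Ioc (0:ℝ) t) :=
          integrableOn_mul_ker measurableSet_Ioc (hfIoc.mono_set hsub) (by fun_prop) (C := 1)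
            (fun s hs => ker_le_one hρ.le (by linarith [hs.2]))
        have i2 : IntegrableOn (fun s => ε * (g s * Real.exp (-ρ * (t - s)))) (Ioc (0:ℝ) t) :=
          (integrableOn_mul_ker measurableSet_Ioc (hgIoc.mono_set hsub) (by fun_prop) (C := 1)
            (fun s hs => ker_le_one hρ.le (by linarith [hs.2]))).const_mul ε
        rw [integral_add i1 i2, integral_const_mul]
      rw [hfs, hinner]
      ring
    rw [setIntegral_congr_fun measurableSet_Ioc hstep]
    rw [split3 hAint hBint hCint ε]
    rw [hc0, hc1, hc2]
    ring
  -- derivative of the quadratic polynomial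
  have hpoly : HasDerivAt (fun ε : ℝ => c0 + c1 * ε + c2 * ε ^ 2) c1 0 := by
    have h1 : HasDerivAt (fun ε : ℝ => c1 * ε) c1 0 := by
      simpa using (hasDerivAt_id (0:ℝ)).const_mul c1
    have h2 : HasDerivAt (fun ε : ℝ => c2 * ε ^ 2) 0 0 := by
      simpa using (hasDerivAt_pow 2 (0:ℝ)).const_mul c2
    have h3 := ((hasDerivAt_const (0:ℝ) c0).add h1).add h2
    rw [zero_add, add_zero] at h3
    exact h3
  -- identify the derivative value
  have hval : γ * (∫ t in (0:ℝ)..T, v' t * ∫ s in (0:ℝ)..T, X' s * Real.exp (-ρ * |t - s|)) +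
      2 * η * ∫ t in (0:ℝ)..T, v' t * X' t = c1 := by
    have e1 : (∫ t in (0:ℝ)..T, v' t * ∫ s in (0:ℝ)..T, X' s * Real.exp (-ρ * |t - s|))
        = ∫ t in Ioc (0:ℝ) T, g t * ∫ s in Ioc (0:ℝ) T, f s * Real.exp (-ρ * |t - s|) := by
      rw [intervalIntegral.integral_of_le hT.le]
      refine setIntegral_congr_fun measurableSet_Ioc fun t ht => ?_
      rw [hgdef, indicator_of_mem ht, intervalIntegral.integral_of_le hT.le]
      congr 1
      refine setIntegral_congr_fun measurableSet_Ioc fun s hs => ?_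
      rw [hfdef, indicator_of_mem hs]
    have e2 : (∫ t in (0:ℝ)..T, v' t * X' t) = ∫ t in Ioc (0:ℝ) T, g t * f t := by
      rw [intervalIntegral.integral_of_le hT.le]
      refine setIntegral_congr_fun measurableSet_Ioc fun t ht => ?_
      rw [hfdef, hgdef, indicator_of_mem ht, indicator_of_mem ht]
    rw [e1, e2, sym_split hρ.le hfIoc hgIoc]
    have e3 : c1 = γ * (∫ t in Ioc (0:ℝ) T, f t * ∫ s in (0:ℝ)..t, g s * Real.exp (-ρ * (t - s)))
        + γ * (∫ t in Ioc (0:ℝ) T, g t * ∫ s in (0:ℝ)..t, f s * Real.exp (-ρ * (t - s)))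
        + 2 * η * ∫ t in Ioc (0:ℝ) T, f t * g t := by
      rw [hc1, split3c hfKv hgKX hfg γ γ (2 * η)]
    rw [e3]
    have e4 : (∫ t in Ioc (0:ℝ) T, g t * f t) = ∫ t in Ioc (0:ℝ) T, f t * g t :=
      setIntegral_congr_fun measurableSet_Ioc fun t _ => mul_comm _ _
    rw [e4]
    ring
  have hfun : (fun ε : ℝ => I (fun t => X' t + ε * v' t))
      = fun ε : ℝ => c0 + c1 * ε + c2 * ε ^ 2 := funext key
  rw [hfun, hval]
  exact hpoly
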